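/- Let X be a compact Hausdorff F-space. Then C_k(X,X) contains no non-trivial convergent sequences: if a sequence (f_n) in C(X,X) converges to f in C_k(X,X), then f_n = f for all sufficiently large n. -/
import Mathlib


/-- A cozero-set of a topological space. -/
def IsCozero {Y : Type*} [TopologicalSpace Y] (s : Set Y) : Prop :=
  ∃ g : Y → ℝ, Continuous g ∧ s = {y | g y ≠ 0}

/-- Two sets are completely separated if some continuous real-valued function is `0` on the
first and `1` on the second. -/
def CompletelySeparated {Y : Type*} [TopologicalSpace Y] (A B : Set Y) : Prop :=
  ∃ h : Y → ℝ, Continuous h ∧ (∀ a ∈ A, h a = 0) ∧ (∀ b ∈ B, h b = 1)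

/-- A space is an F-space if any two disjoint cozero-sets are completely separated. -/
def IsFSpace (Y : Type*) [TopologicalSpace Y] : Prop :=
  ∀ A B : Set Y, IsCozero A → IsCozero B → A ∩ B = ∅ → CompletelySeparated A B


open Filter Topology Set

lemma isCozero_lt {X : Type*} [TopologicalSpace X] {g : X → ℝ} (hg : Continuous g) (c : ℝ) :
    IsCozero {x | c < g x} := by
  refine ⟨fun x => max (g x - c) 0, (hg.sub continuous_const).max continuous_const, ?_⟩
  ext x
  simp only [mem_setOf_eq]
  constructor
  · intro h
    have : 0 < max (g x - c) 0 := lt_max_of_lt_left (by linarith)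
    exact ne_of_gt this
  · intro h
    rcases le_or_gt (g x) c with h1 | h1
    · exact absurd (max_eq_right (by linarith)) h
    · exact h1

lemma isCozero_iUnion {X : Type*} [TopologicalSpace X] {s : ℕ → Set X}
    (h : ∀ k, IsCozero (s k)) : IsCozero (⋃ k, s k) := by
  choose g hgc hgs using h
  set t : ℕ → X → ℝ := fun k x => (1/2 : ℝ) ^ k * min |g k x| 1 with ht
  have htc : ∀ k, Continuous (t k) := fun k =>
    continuous_const.mul (((hgc k).abs).min continuous_const)
  have htnn : ∀ k x, 0 ≤ t k x := fun k x =>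
    mul_nonneg (by positivity) (le_min (abs_nonneg _) zero_le_one)
  have htle : ∀ k x, ‖t k x‖ ≤ (1/2 : ℝ) ^ k := by
    intro k x
    rw [Real.norm_eq_abs, abs_of_nonneg (htnn k x)]
    calc (1/2 : ℝ) ^ k * min |g k x| 1 ≤ (1/2 : ℝ) ^ k * 1 := by
          apply mul_le_mul_of_nonneg_left (min_le_right _ _) (by positivity)
      _ = (1/2 : ℝ) ^ k := mul_one _
  have hb : Summable (fun k : ℕ => (1/2 : ℝ) ^ k) :=
    summable_geometric_of_lt_one (by norm_num) (by norm_num)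
  have htle' : ∀ k x, t k x ≤ (1/2 : ℝ) ^ k := by
    intro k x
    have := htle k x
    rwa [Real.norm_eq_abs, abs_of_nonneg (htnn k x)] at this
  have hsum : ∀ x, Summable (fun k => t k x) := fun x =>
    Summable.of_nonneg_of_le (fun k => htnn k x) (fun k => htle' k x) hb
  refine ⟨fun x => ∑' k, t k x, ?_, ?_⟩
  · exact continuous_tsum htc hb htle
  · ext x
    simp only [mem_iUnion, mem_setOf_eq]
    constructor
    · rintro ⟨k, hk⟩
      rw [hgs k, mem_setOf_eq] at hk
      have htk : 0 < t k x := by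
        apply mul_pos (by positivity)
        exact lt_min (abs_pos.2 hk) one_pos
      have : t k x ≤ ∑' j, t j x := Summable.le_tsum (hsum x) k (fun j _ => htnn j x)
      exact ne_of_gt (lt_of_lt_of_le htk this)
    · intro hx
      by_contra hc
      push_neg at hc
      apply hx
      have hall : ∀ k, t k x = 0 := by
        intro k
        have hk : x ∉ s k := fun hmem => hc k hmem
        rw [hgs k, mem_setOf_eq, not_not] at hk
        simp [ht, hk]
      calc (∑' k, t k x) = ∑' _ : ℕ, (0:ℝ) := tsum_congr hall
        _ = 0 := tsum_zero

section Core
variable {X : Type*} [TopologicalSpace X] [CompactSpace X] [T2Space X]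

structure Item (X : Type*) [TopologicalSpace X] (p : X) (P : ℕ → X → X → Prop) where
  O : Set X
  n : ℕ
  u : X
  w : X
  U : Set X
  V : Set X
  O' : Set X
  hO : IsOpen O
  hp : p ∈ O
  hP : P n u w
  hU : IsCozero U
  hV : IsCozero V
  hu : u ∈ U
  hw : w ∈ V
  hUO : U ⊆ O
  hVO : V ⊆ O
  hUV : U ∩ V = ∅
  hO' : IsOpen O'
  hp' : p ∈ O'
  hO'O : O' ⊆ O
  hO'U : O' ∩ U = ∅
  hO'V : O' ∩ V = ∅

lemma buildItem (p : X) (P : ℕ → X → X → Prop) (O : Set X) (hO : IsOpen O) (hp : p ∈ O)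
    (N : ℕ) (H : ∃ n ≥ N, ∃ u w, u ∈ O ∧ w ∈ O ∧ u ≠ w ∧ u ≠ p ∧ w ≠ p ∧ P n u w) :
    ∃ t : Item X p P, t.O = O ∧ N ≤ t.n := by
  obtain ⟨n, hn, u, w, huO, hwO, huw, hup, hwp, hPn⟩ := H
  -- first Urysohn function: separate u from {w, p} ∪ Oᶜ
  have hC1 : IsClosed (({w, p} : Set X) ∪ Oᶜ) :=
    ((Set.toFinite ({w, p} : Set X)).isClosed).union hO.isClosed_compl
  have hC1u : Disjoint (({w, p} : Set X) ∪ Oᶜ) {u} := by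
    simp only [Set.disjoint_singleton_right, Set.mem_union, Set.mem_insert_iff,
      Set.mem_singleton_iff, Set.mem_compl_iff, not_or, not_not]
    exact ⟨⟨huw, hup⟩, huO⟩
  obtain ⟨f1, hf10, hf11, hf1m⟩ := exists_continuous_zero_one_of_isClosed hC1
    isClosed_singleton hC1u
  have hf1u : f1 u = 1 := by simpa using hf11 (Set.mem_singleton u)
  have hf1p : f1 p = 0 := by simpa using hf10 (Or.inl (Set.mem_insert_iff.2 (Or.inr rfl)))
  have hf1w : f1 w = 0 := by simpa using hf10 (Or.inl (Set.mem_insert w {p}))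
  have hf1O : ∀ x ∉ O, f1 x = 0 := fun x hx => by simpa using hf10 (Or.inr hx)
  -- second Urysohn function: separate w from {f1 ≥ 1/2} ∪ {p} ∪ Oᶜ
  have hC2 : IsClosed ({x | (1:ℝ)/2 ≤ f1 x} ∪ ({p} : Set X) ∪ Oᶜ) :=
    ((isClosed_le continuous_const f1.continuous).union isClosed_singleton).union
      hO.isClosed_compl
  have hC2w : Disjoint ({x | (1:ℝ)/2 ≤ f1 x} ∪ ({p} : Set X) ∪ Oᶜ) {w} := by
    simp only [Set.disjoint_singleton_right, Set.mem_union, Set.mem_setOf_eq,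
      Set.mem_singleton_iff, Set.mem_compl_iff, not_or, not_not, not_le]
    exact ⟨⟨by rw [hf1w]; norm_num, hwp⟩, hwO⟩
  obtain ⟨f2, hf20, hf21, hf2m⟩ := exists_continuous_zero_one_of_isClosed hC2
    isClosed_singleton hC2w
  have hf2w : f2 w = 1 := by simpa using hf21 (Set.mem_singleton w)
  have hf2p : f2 p = 0 := by simpa using hf20 (Or.inl (Or.inr rfl))
  have hf2O : ∀ x ∉ O, f2 x = 0 := fun x hx => by simpa using hf20 (Or.inr hx)
  have hf2f1 : ∀ x, (1:ℝ)/2 ≤ f1 x → f2 x = 0 := fun x hx => by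
    simpa using hf20 (Or.inl (Or.inl hx))
  refine ⟨{ O := O, n := n, u := u, w := w,
            U := {x | (1:ℝ)/2 < f1 x}, V := {x | (1:ℝ)/2 < f2 x},
            O' := O ∩ {x | f1 x < (1:ℝ)/2} ∩ {x | f2 x < (1:ℝ)/2},
            hO := hO, hp := hp, hP := hPn,
            hU := isCozero_lt f1.continuous _, hV := isCozero_lt f2.continuous _,
            hu := by simp [hf1u]; norm_num, hw := by simp [hf2w]; norm_num,
            hUO := ?_, hVO := ?_, hUV := ?_, hO' := ?_, hp' := ?_,
            hO'O := fun x hx => hx.1.1, hO'U := ?_, hO'V := ?_ }, rfl, hn⟩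
  · intro x hx
    by_contra hxO
    rw [Set.mem_setOf_eq, hf1O x hxO] at hx
    norm_num at hx
  · intro x hx
    by_contra hxO
    rw [Set.mem_setOf_eq, hf2O x hxO] at hx
    norm_num at hx
  · ext x
    simp only [Set.mem_inter_iff, Set.mem_setOf_eq, Set.mem_empty_iff_false, iff_false, not_and]
    intro h1 h2
    rw [hf2f1 x (le_of_lt h1)] at h2
    norm_num at h2
  · exact (hO.inter (isOpen_lt f1.continuous continuous_const)).inter
      (isOpen_lt f2.continuous continuous_const)
  · refine ⟨⟨hp, ?_⟩, ?_⟩ <;> simp [hf1p, hf2p] <;> norm_num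
  · ext x
    simp only [Set.mem_inter_iff, Set.mem_setOf_eq, Set.mem_empty_iff_false, iff_false, not_and]
    intro h1 h2
    exact absurd h2 (not_lt.2 (le_of_lt h1.1.2))
  · ext x
    simp only [Set.mem_inter_iff, Set.mem_setOf_eq, Set.mem_empty_iff_false, iff_false, not_and]
    intro h1 h2
    exact absurd h2 (not_lt.2 (le_of_lt h1.2))

end Core

section Core2
variable {X : Type*} [TopologicalSpace X] [CompactSpace X] [T2Space X]

lemma coreLemma (p : X) (P : ℕ → X → X → Prop)
    (H : ∀ O : Set X, IsOpen O → p ∈ O → ∀ N : ℕ,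
      ∃ n ≥ N, ∃ u w, u ∈ O ∧ w ∈ O ∧ u ≠ w ∧ u ≠ p ∧ w ≠ p ∧ P n u w) :
    ∃ A B : Set X, IsCozero A ∧ IsCozero B ∧ A ∩ B = ∅ ∧
      ∀ N : ℕ, ∃ n ≥ N, ∃ u w, u ∈ A ∧ w ∈ B ∧ P n u w := by
  -- recursive chain of items
  let next : Item X p P → Item X p P := fun s =>
    (buildItem p P s.O' s.hO' s.hp' (s.n + 1) (H s.O' s.hO' s.hp' (s.n + 1))).choose
  have hnext : ∀ s : Item X p P, (next s).O = s.O' ∧ s.n + 1 ≤ (next s).n := fun s =>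
    (buildItem p P s.O' s.hO' s.hp' (s.n + 1) (H s.O' s.hO' s.hp' (s.n + 1))).choose_spec
  let init : Item X p P :=
    (buildItem p P Set.univ isOpen_univ (Set.mem_univ p) 0
      (H Set.univ isOpen_univ (Set.mem_univ p) 0)).choose
  let c : ℕ → Item X p P := fun k => Nat.rec init (fun _ s => next s) k
  have hc0 : c 0 = init := rfl
  have hcs : ∀ k, c (k + 1) = next (c k) := fun k => rfl
  -- basic relations
  have hOsucc : ∀ k, (c (k + 1)).O = (c k).O' := fun k => (hnext (c k)).1
  have hnsucc : ∀ k, (c k).n + 1 ≤ (c (k + 1)).n := fun k => (hnext (c k)).2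
  have hmono : ∀ j k, j < k → (c k).O ⊆ (c j).O' := by
    intro j k hjk
    induction k with
    | zero => omega
    | succ k ih =>
      rcases Nat.lt_succ_iff_lt_or_eq.1 hjk with h | h
      · intro x hx
        rw [hOsucc k] at hx
        exact ih h ((c k).hO'O hx)
      · rw [h, hOsucc k]
  have hnk : ∀ k, k ≤ (c k).n := by
    intro k
    induction k with
    | zero => exact Nat.zero_le _
    | succ k ih => exact le_trans (Nat.succ_le_succ ih) (hnsucc k)
  -- disjointness
  have hdisj : ∀ j k, (c j).U ∩ (c k).V = ∅ := by
    intro j k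
    rcases lt_trichotomy j k with h | h | h
    · apply Set.eq_empty_of_forall_notMem
      intro x ⟨hxU, hxV⟩
      have : x ∈ (c j).O' := hmono j k h ((c k).hVO hxV)
      have : x ∈ (c j).O' ∩ (c j).U := ⟨this, hxU⟩
      rw [(c j).hO'U] at this
      exact this
    · rw [h]; exact (c k).hUV
    · apply Set.eq_empty_of_forall_notMem
      intro x ⟨hxU, hxV⟩
      have : x ∈ (c k).O' := hmono k j h ((c j).hUO hxU)
      have : x ∈ (c k).O' ∩ (c k).V := ⟨this, hxV⟩
      rw [(c k).hO'V] at this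
      exact this
  refine ⟨⋃ k, (c k).U, ⋃ k, (c k).V, isCozero_iUnion (fun k => (c k).hU),
    isCozero_iUnion (fun k => (c k).hV), ?_, ?_⟩
  · apply Set.eq_empty_of_forall_notMem
    rintro x ⟨hxA, hxB⟩
    obtain ⟨j, hj⟩ := Set.mem_iUnion.1 hxA
    obtain ⟨k, hk⟩ := Set.mem_iUnion.1 hxB
    have := hdisj j k
    rw [Set.eq_empty_iff_forall_notMem] at this
    exact this x ⟨hj, hk⟩
  · intro N
    refine ⟨(c N).n, hnk N, (c N).u, (c N).w, ?_, ?_, (c N).hP⟩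
    · exact Set.mem_iUnion.2 ⟨N, (c N).hu⟩
    · exact Set.mem_iUnion.2 ⟨N, (c N).hw⟩

end Core2

section L1
variable {X : Type*} [TopologicalSpace X] [CompactSpace X] [T2Space X]

lemma no_conv_seq (hX : IsFSpace X) (y : ℕ → X) (p : X)
    (hy : Tendsto y atTop (𝓝 p)) (hne : ∀ n, y n ≠ p) : False := by
  by_cases hrep : ∃ q, ∀ N, ∃ n ≥ N, y n = q
  · obtain ⟨q, hq⟩ := hrep
    have hqp : q ≠ p := by
      obtain ⟨n0, _, h0⟩ := hq 0
      exact h0 ▸ hne n0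
    obtain ⟨Oq, Op, hOq, hOp, hqm, hpm, hd⟩ := t2_separation hqp
    have hev : ∀ᶠ n in atTop, y n ∈ Op := hy (hOp.mem_nhds hpm)
    obtain ⟨N, hN⟩ := eventually_atTop.1 hev
    obtain ⟨n, hn, hyn⟩ := hq N
    exact Set.disjoint_left.1 hd hqm (hyn ▸ hN n hn)
  · push_neg at hrep
    have hH : ∀ O : Set X, IsOpen O → p ∈ O → ∀ N : ℕ, ∃ n ≥ N, ∃ u w, u ∈ O ∧ w ∈ O ∧
        u ≠ w ∧ u ≠ p ∧ w ≠ p ∧ (∃ i j, n ≤ i ∧ n ≤ j ∧ y i = u ∧ y j = w) := by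
      intro O hO hpO N
      obtain ⟨M0, hM0⟩ := eventually_atTop.1 (hy (hO.mem_nhds hpO))
      set M := max N M0 with hM
      obtain ⟨K, hK⟩ := hrep (y M)
      set j := max (M + 1) K with hj
      have hjK : y j ≠ y M := hK j (le_max_right _ _)
      refine ⟨N, le_refl N, y M, y j, hM0 M (le_max_right _ _),
        hM0 j (le_trans (le_max_right _ _) (le_trans (Nat.le_succ M) (le_max_left _ _))),
        (fun hc => hjK hc.symm),
        hne M, hne j, M, j, le_max_left _ _,
        le_trans (le_max_left _ _) (le_trans (Nat.le_succ M) (le_max_left _ _)), rfl, rfl⟩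
    obtain ⟨A, B, hA, hB, hAB, hfreq⟩ := coreLemma p
      (fun n u w => ∃ i j, n ≤ i ∧ n ≤ j ∧ y i = u ∧ y j = w) hH
    obtain ⟨h, hc, h0, h1⟩ := hX A B hA hB hAB
    have hten : Tendsto (fun n => h (y n)) atTop (𝓝 (h p)) := (hc.tendsto p).comp hy
    obtain ⟨N, hN⟩ := Metric.tendsto_atTop.1 hten (1/3) (by norm_num)
    obtain ⟨n, hn, u, w, huA, hwB, i, j, hi, hj, hyi, hyj⟩ := hfreq N
    have d1 : dist (h (y i)) (h p) < 1/3 := hN i (le_trans hn hi)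
    have d2 : dist (h (y j)) (h p) < 1/3 := hN j (le_trans hn hj)
    rw [hyi, h0 u huA, Real.dist_eq] at d1
    rw [hyj, h1 w hwB, Real.dist_eq] at d2
    rw [abs_lt] at d1 d2
    linarith [d1.1, d1.2, d2.1, d2.2]

end L1


/-- For a compact Hausdorff F-space `X`, the space `C_k(X, X)` contains no non-trivial
convergent sequences: every sequence converging to `f` is eventually equal to `f`. -/
theorem no_nontrivial_convergent_sequences
    (X : Type*) [TopologicalSpace X] [CompactSpace X] [T2Space X] (hX : IsFSpace X)
    (F : ℕ → C(X, X)) (f : C(X, X))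
    (hconv : Filter.Tendsto F Filter.atTop (nhds f)) :
    ∃ N : ℕ, ∀ n ≥ N, F n = f := by
  by_contra hcon
  push_neg at hcon
  have hwit : ∀ n, F n ≠ f → ∃ z : X, F n z ≠ f z := by
    intro n h
    by_contra h'
    push_neg at h'
    exact h (ContinuousMap.ext h')
  obtain ⟨n0, _, hn0⟩ := hcon 0
  obtain ⟨x0, _⟩ := hwit n0 hn0
  have hwit' : ∀ n, ∃ z : X, (F n ≠ f → F n z ≠ f z) := by
    intro n
    by_cases h : F n ≠ f
    · obtain ⟨z, hz⟩ := hwit n h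
      exact ⟨z, fun _ => hz⟩
    · exact ⟨x0, fun h' => absurd h' h⟩
  choose x hx using hwit'
  set a : ℕ → X := fun n => F n (x n) with ha
  set b : ℕ → X := fun n => f (x n) with hb
  have hab : ∀ n, F n ≠ f → a n ≠ b n := fun n h => hx n h
  -- uniform convergence of real-valued compositions
  have hUnif : ∀ g : C(X, ℝ), ∀ ε : ℝ, 0 < ε → ∃ N, ∀ n ≥ N, ∀ z : X,
      |g (F n z) - g (f z)| < ε := by
    intro g ε hε
    have hten : Tendsto (fun n => g.comp (F n)) atTop (𝓝 (g.comp f)) :=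
      ((ContinuousMap.continuous_postcomp g).tendsto f).comp hconv
    obtain ⟨N, hN⟩ := Metric.tendsto_atTop.1 hten ε hε
    refine ⟨N, fun n hn z => ?_⟩
    have h1 : dist ((g.comp (F n)) z) ((g.comp f) z) ≤ dist (g.comp (F n)) (g.comp f) :=
      ContinuousMap.dist_apply_le_dist z
    have h2 := hN n hn
    rw [← Real.dist_eq]
    calc dist (g (F n z)) (g (f z)) ≤ dist (g.comp (F n)) (g.comp f) := h1
      _ < ε := h2
  set S : Set ℕ := {n | F n ≠ f} with hS
  have hLne : (atTop ⊓ 𝓟 S).NeBot := by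
    rw [Filter.inf_principal_neBot_iff]
    intro U hU
    obtain ⟨N1, hN1⟩ := Filter.mem_atTop_sets.1 hU
    obtain ⟨n, hn, hnS⟩ := hcon N1
    exact ⟨n, hN1 n hn, hnS⟩
  obtain ⟨p, hp⟩ := exists_clusterPt_of_compactSpace (Filter.map a (atTop ⊓ 𝓟 S))
  have hmp : MapClusterPt p (atTop ⊓ 𝓟 S) a := hp
  have hfreqL : ∀ Q : ℕ → Prop, (∃ᶠ n in atTop ⊓ 𝓟 S, Q n) →
      ∀ M, ∃ n ≥ M, n ∈ S ∧ Q n := by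
    intro Q hfq M
    by_contra hno
    push_neg at hno
    apply hfq
    rw [Filter.eventually_inf_principal]
    filter_upwards [Filter.eventually_ge_atTop M] with n hn hS'
    exact hno n hn hS'
  -- an auxiliary: Urysohn functions vanishing off O and equal to 1 at p
  have hury : ∀ O : Set X, IsOpen O → p ∈ O → ∃ g : C(X, ℝ),
      (∀ z ∉ O, g z = 0) ∧ g p = 1 := by
    intro O hO hpO
    obtain ⟨g, hg0, hg1, _⟩ := exists_continuous_zero_one_of_isClosed hO.isClosed_compl
      isClosed_singleton (Set.disjoint_singleton_right.2 (fun h => h hpO))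
    exact ⟨g, fun z hz => by simpa using hg0 hz, by simpa using hg1 rfl⟩
  have hstrong : ∀ O : Set X, IsOpen O → p ∈ O → ∀ N, ∃ n ≥ N, n ∈ S ∧ a n ∈ O ∧ b n ∈ O := by
    intro O hO hpO N
    obtain ⟨g, hg0, hg1⟩ := hury O hO hpO
    obtain ⟨N1, hN1⟩ := hUnif g (1/4) (by norm_num)
    have hU'open : IsOpen {z : X | (3:ℝ)/4 < g z} := isOpen_lt continuous_const g.continuous
    have hU'p : p ∈ {z : X | (3:ℝ)/4 < g z} := by
      simp only [Set.mem_setOf_eq, hg1]; norm_num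
    have hfq : ∃ᶠ n in atTop ⊓ 𝓟 S, a n ∈ {z : X | (3:ℝ)/4 < g z} :=
      (mapClusterPt_iff_frequently.1 hmp) _ (hU'open.mem_nhds hU'p)
    obtain ⟨n, hn, hnS, hna⟩ := hfreqL _ hfq (max N N1)
    have hd : |g (F n (x n)) - g (f (x n))| < 1/4 :=
      hN1 n (le_trans (le_max_right _ _) hn) (x n)
    have hga : (3:ℝ)/4 < g (a n) := hna
    rw [ha] at hga
    rw [abs_lt] at hd
    have hgb : (1:ℝ)/2 < g (f (x n)) := by linarith [hd.1, hd.2]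
    have hbO : b n ∈ O := by
      by_contra hb'
      rw [hb] at hb'
      rw [hg0 _ hb'] at hgb
      norm_num at hgb
    have haO : a n ∈ O := by
      by_contra ha'
      rw [ha] at ha'
      rw [hg0 _ ha'] at hga
      norm_num at hga
    exact ⟨n, le_trans (le_max_left _ _) hn, hnS, haO, hbO⟩
  have hinf : ∀ T : Set ℕ, (∀ N, ∃ n ≥ N, n ∈ T) → T.Infinite := by
    intro T h
    by_contra hfin
    rw [Set.not_infinite] at hfin
    obtain ⟨N, hN⟩ := hfin.bddAbove
    obtain ⟨n, hn, hnT⟩ := h (N + 1)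
    exact absurd (hN hnT) (by omega)
  by_cases hA : ∀ N, ∃ n ≥ N, n ∈ S ∧ a n = p
  · -- infinitely often a n = p : then b converges to p along those n, nontrivially
    have hTinf : {n | n ∈ S ∧ a n = p}.Infinite := hinf _ (fun N => hA N)
    set e := Nat.nth (fun n => n ∈ S ∧ a n = p) with he
    have he_mem : ∀ k, e k ∈ S ∧ a (e k) = p := fun k => Nat.nth_mem_of_infinite hTinf k
    have he_ge : ∀ k, k ≤ e k := fun k => (Nat.nth_strictMono hTinf).le_apply
    have hten : Tendsto (fun k => b (e k)) atTop (𝓝 p) := by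
      rw [tendsto_nhds]
      intro O hO hpO
      obtain ⟨g, hg0, hg1⟩ := hury O hO hpO
      obtain ⟨N1, hN1⟩ := hUnif g (1/2) (by norm_num)
      refine Filter.mem_atTop_sets.2 ⟨N1, fun k hk => ?_⟩
      have hd := hN1 (e k) (le_trans hk (he_ge k)) (x (e k))
      have hga : g (F (e k) (x (e k))) = 1 := by
        rw [show F (e k) (x (e k)) = p from (he_mem k).2, hg1]
      show b (e k) ∈ O
      by_contra hbO
      have hgb : g (f (x (e k))) = 0 := hg0 _ hbO
      rw [hga, hgb, abs_lt] at hd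
      norm_num at hd
    exact no_conv_seq hX (fun k => b (e k)) p hten
      (fun k hkeq => hab (e k) (he_mem k).1 ((he_mem k).2.trans hkeq.symm))
  by_cases hB : ∀ N, ∃ n ≥ N, n ∈ S ∧ b n = p
  · have hTinf : {n | n ∈ S ∧ b n = p}.Infinite := hinf _ (fun N => hB N)
    set e := Nat.nth (fun n => n ∈ S ∧ b n = p) with he
    have he_mem : ∀ k, e k ∈ S ∧ b (e k) = p := fun k => Nat.nth_mem_of_infinite hTinf k
    have he_ge : ∀ k, k ≤ e k := fun k => (Nat.nth_strictMono hTinf).le_apply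
    have hten : Tendsto (fun k => a (e k)) atTop (𝓝 p) := by
      rw [tendsto_nhds]
      intro O hO hpO
      obtain ⟨g, hg0, hg1⟩ := hury O hO hpO
      obtain ⟨N1, hN1⟩ := hUnif g (1/2) (by norm_num)
      refine Filter.mem_atTop_sets.2 ⟨N1, fun k hk => ?_⟩
      have hd := hN1 (e k) (le_trans hk (he_ge k)) (x (e k))
      have hgb : g (f (x (e k))) = 1 := by
        rw [show f (x (e k)) = p from (he_mem k).2, hg1]
      show a (e k) ∈ O
      by_contra haO
      have hga : g (F (e k) (x (e k))) = 0 := hg0 _ haO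
      rw [hga, hgb, abs_lt] at hd
      norm_num at hd
    exact no_conv_seq hX (fun k => a (e k)) p hten
      (fun k hkeq => hab (e k) (he_mem k).1 (hkeq.trans (he_mem k).2.symm))
  -- main case
  push_neg at hA hB
  obtain ⟨NA, hNA⟩ := hA
  obtain ⟨NB, hNB⟩ := hB
  have hH : ∀ O : Set X, IsOpen O → p ∈ O → ∀ N : ℕ, ∃ n ≥ N, ∃ u w, u ∈ O ∧ w ∈ O ∧
      u ≠ w ∧ u ≠ p ∧ w ≠ p ∧ (n ∈ S ∧ a n = u ∧ b n = w) := by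
    intro O hO hpO N
    obtain ⟨n, hn, hnS, haO, hbO⟩ := hstrong O hO hpO (max N (max NA NB))
    have hnNA : NA ≤ n := le_trans (le_trans (le_max_left _ _) (le_max_right _ _)) hn
    have hnNB : NB ≤ n := le_trans (le_trans (le_max_right _ _) (le_max_right _ _)) hn
    exact ⟨n, le_trans (le_max_left _ _) hn, a n, b n, haO, hbO, hab n hnS,
      hNA n hnNA hnS, hNB n hnNB hnS, hnS, rfl, rfl⟩
  obtain ⟨A, B, hAcoz, hBcoz, hABd, hfq2⟩ := coreLemma p
    (fun n u w => n ∈ S ∧ a n = u ∧ b n = w) hH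
  obtain ⟨h, hc, h0, h1⟩ := hX A B hAcoz hBcoz hABd
  obtain ⟨N1, hN1⟩ := hUnif ⟨h, hc⟩ (1/2) (by norm_num)
  obtain ⟨n, hn, u, w, huA, hwB, hnS, hau, hbw⟩ := hfq2 N1
  have hd := hN1 n hn (x n)
  have e1 : h (F n (x n)) = 0 := by
    rw [show F n (x n) = u from hau]
    exact h0 u huA
  have e2 : h (f (x n)) = 1 := by
    rw [show f (x n) = w from hbw]
    exact h1 w hwB
  simp only [ContinuousMap.coe_mk] at hd
  rw [e1, e2, abs_lt] at hd
  norm_num at hd
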